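/- The Magnus expansion M : F → ℤ⟪X_i : i ∈ I⟫, sending generator x_i to 1 + X_i and x_i⁻¹ to 1 - X_i + X_i² - ⋯, is an injective group homomorphism from the free group F on {x_i}_{i∈I} into the group of units of the ring of formal power series in non-commuting indeterminates X_i with integer coefficients, and its image is contained in the set of power series with constant term 1. -/

import Mathlib

/-! Noncommutative formal power series over `ℤ` in indeterminates indexed by `I`
are modelled as coefficient functions on words (`List I`). -/

/-- Convolution (Cauchy) product of noncommutative power series. -/
def conv {I : Type*} (f g : List I → ℤ) : List I → ℤ :=
  fun w => ∑ k ∈ Finset.range (w.length + 1), f (w.take k) * g (w.drop k)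

/-- The power series `1`. -/
def oneSeries {I : Type*} : List I → ℤ := fun w => match w with | [] => 1 | _ => 0

/-- The power series `1 + X_i`, the Magnus expansion of the generator `x_i`. -/
def genSeries {I : Type*} [DecidableEq I] (i : I) : List I → ℤ :=
  fun w => if w = [] ∨ w = [i] then 1 else 0

/-- The power series `1 - X_i + X_i² - ⋯`, the Magnus expansion of `x_i⁻¹`. -/
def invGenSeries {I : Type*} [DecidableEq I] (i : I) : List I → ℤ :=
  fun w => if w = List.replicate w.length i then (-1) ^ w.length else 0

/-- The expansion of a single letter of a reduced word. -/
def letterSeries {I : Type*} [DecidableEq I] (p : I × Bool) : List I → ℤ :=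
  if p.2 then genSeries p.1 else invGenSeries p.1

/-- The Magnus expansion of an element of the free group on `I`. -/
def magnus {I : Type*} [DecidableEq I] (a : FreeGroup I) : List I → ℤ :=
  ((FreeGroup.toWord a).map letterSeries).foldr conv oneSeries

section Magnus

variable {I : Type*} [DecidableEq I]

open List
set_option linter.unusedSectionVars false

/-! ### Basic properties of `conv` -/

lemma conv_nil (f g : List I → ℤ) : conv f g [] = f [] * g [] := by
  simp [conv]

lemma conv_cons (f g : List I → ℤ) (a : I) (w : List I) :
    conv f g (a :: w) = f [] * g (a :: w) + conv (fun u => f (a :: u)) g w := by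
  simp only [conv, List.length_cons]
  rw [Finset.sum_range_succ']
  simp [add_comm]

lemma oneSeries_nil : (oneSeries : List I → ℤ) [] = 1 := rfl

lemma oneSeries_cons (a : I) (w : List I) : (oneSeries : List I → ℤ) (a :: w) = 0 := rfl

lemma conv_zero_left (g : List I → ℤ) (w : List I) : conv (fun _ => (0:ℤ)) g w = 0 := by
  simp [conv]

lemma conv_neg_left (f g : List I → ℤ) (w : List I) :
    conv (fun u => -(f u)) g w = -(conv f g w) := by
  simp [conv, Finset.sum_neg_distrib]

lemma conv_const_mul_left (c : ℤ) (f g : List I → ℤ) (w : List I) :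
    conv (fun u => c * f u) g w = c * conv f g w := by
  simp [conv, Finset.mul_sum, mul_assoc]

lemma conv_add_left (f f' g : List I → ℤ) (w : List I) :
    conv (fun u => f u + f' u) g w = conv f g w + conv f' g w := by
  simp [conv, add_mul, Finset.sum_add_distrib]

lemma conv_one_left (f : List I → ℤ) : conv oneSeries f = f := by
  funext w
  cases w with
  | nil => simp [conv_nil, oneSeries]
  | cons a w =>
    rw [conv_cons]
    have : (fun u => (oneSeries : List I → ℤ) (a :: u)) = fun _ => (0:ℤ) := by
      funext u; rfl
    rw [this, conv_zero_left, oneSeries_nil]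
    ring

lemma conv_one_right (f : List I → ℤ) : conv f oneSeries = f := by
  funext w
  unfold conv
  rw [Finset.sum_eq_single w.length]
  · simp [oneSeries]
  · intro k hk hne
    have hk' : k < w.length := by
      have := Finset.mem_range.1 hk; omega
    have : (w.drop k) ≠ [] := by
      intro h
      have := congrArg List.length h
      simp at this; omega
    obtain ⟨a, t, h⟩ := List.exists_cons_of_ne_nil this
    rw [h]
    simp [oneSeries]
  · intro h; simp at h

lemma conv_assoc (f g h : List I → ℤ) : conv (conv f g) h = conv f (conv g h) := by
  funext w
  induction w generalizing f with
  | nil => simp [conv_nil, mul_assoc]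
  | cons a w ih =>
    rw [conv_cons, conv_cons, conv_cons, conv_nil]
    have h1 : (fun u => conv f g (a :: u)) =
        fun u => f [] * g (a :: u) + conv (fun v => f (a :: v)) g u := by
      funext u; rw [conv_cons]
    rw [h1, conv_add_left, conv_const_mul_left, ih]
    ring

/-! ### The word-level Magnus map -/

/-- Magnus expansion of an arbitrary word. -/
def mw (L : List (I × Bool)) : List I → ℤ :=
  (L.map letterSeries).foldr conv oneSeries

lemma mw_nil : mw ([] : List (I × Bool)) = oneSeries := rfl

lemma mw_cons (p : I × Bool) (L : List (I × Bool)) :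
    mw (p :: L) = conv (letterSeries p) (mw L) := rfl

lemma magnus_eq_mw (a : FreeGroup I) : magnus a = mw (FreeGroup.toWord a) := rfl

lemma letterSeries_nil (p : I × Bool) : letterSeries p [] = 1 := by
  rcases p with ⟨i, b⟩
  cases b <;> simp [letterSeries, genSeries, invGenSeries]

lemma mw_coeff_nil (L : List (I × Bool)) : mw L [] = 1 := by
  induction L with
  | nil => rfl
  | cons p L ih => rw [mw_cons, conv_nil, letterSeries_nil, ih, mul_one]

lemma conv_foldr (x : List I → ℤ) (l : List (List I → ℤ)) :
    l.foldr conv x = conv (l.foldr conv oneSeries) x := by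
  induction l with
  | nil => rw [List.foldr_nil, List.foldr_nil, conv_one_left]
  | cons f l ih => rw [List.foldr_cons, List.foldr_cons, ih, conv_assoc]

lemma mw_append (L₁ L₂ : List (I × Bool)) :
    mw (L₁ ++ L₂) = conv (mw L₁) (mw L₂) := by
  unfold mw
  rw [List.map_append, List.foldr_append, conv_foldr]

lemma invGenSeries_cons_self (i : I) (u : List I) :
    invGenSeries i (i :: u) = -(invGenSeries i u) := by
  simp only [invGenSeries, List.length_cons, List.replicate_succ, List.cons.injEq, true_and]
  by_cases h : u = List.replicate u.length i
  · rw [if_pos h, if_pos h, pow_succ]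
    ring
  · rw [if_neg h, if_neg h, neg_zero]

lemma invGenSeries_cons_ne (i a : I) (h : a ≠ i) (u : List I) :
    invGenSeries i (a :: u) = 0 := by
  simp only [invGenSeries, List.length_cons, List.replicate_succ, List.cons.injEq]
  simp [h]

lemma genSeries_inv (i : I) :
    conv (genSeries i) (invGenSeries i) = oneSeries := by
  funext w
  cases w with
  | nil => simp [conv_nil, genSeries, invGenSeries, oneSeries]
  | cons a w =>
    rw [conv_cons]
    rw [show genSeries i [] = 1 by simp [genSeries], one_mul]
    by_cases h : a = i
    · subst h
      have h1 : (fun u => genSeries a (a :: u)) = (oneSeries : List I → ℤ) := by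
        funext u
        cases u <;> simp [genSeries, oneSeries]
      rw [h1, conv_one_left, invGenSeries_cons_self]
      simp [oneSeries]
    · have h1 : (fun u => genSeries i (a :: u)) = fun _ => (0:ℤ) := by
        funext u
        simp [genSeries, h]
      rw [h1, conv_zero_left, invGenSeries_cons_ne i a h]
      simp [oneSeries]

lemma invGenSeries_mul (i : I) :
    conv (invGenSeries i) (genSeries i) = oneSeries := by
  funext w
  induction w with
  | nil => simp [conv_nil, genSeries, invGenSeries, oneSeries]
  | cons a w ih =>
    rw [conv_cons]
    by_cases h : a = i
    · subst h
      have h1 : (fun u => invGenSeries a (a :: u)) = fun u => -(invGenSeries a u) := by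
        funext u; exact invGenSeries_cons_self a u
      rw [h1, conv_neg_left, ih]
      rw [show invGenSeries a [] = 1 by simp [invGenSeries]]
      cases w <;> simp [genSeries, oneSeries]
    · have h1 : (fun u => invGenSeries i (a :: u)) = fun _ => (0:ℤ) := by
        funext u; exact invGenSeries_cons_ne i a h u
      rw [h1, conv_zero_left]
      rw [show invGenSeries i [] = 1 by simp [invGenSeries]]
      simp [genSeries, oneSeries, h, List.cons.injEq]

lemma letter_mul_letter (x : I) (b : Bool) :
    conv (letterSeries (x, b)) (letterSeries (x, !b)) = oneSeries := by
  cases b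
  · simpa [letterSeries] using invGenSeries_mul x
  · simpa [letterSeries] using genSeries_inv x

/-! ### Invariance under reduction -/

lemma mw_step {L₁ L₂ : List (I × Bool)} (h : FreeGroup.Red.Step L₁ L₂) :
    mw L₁ = mw L₂ := by
  cases h with
  | @not L₁ L₂ x b =>
    have hm : mw ((x, b) :: (x, !b) :: L₂) = mw L₂ := by
      rw [mw_cons, mw_cons, ← conv_assoc, letter_mul_letter, conv_one_left]
    rw [mw_append, mw_append, hm]

lemma mw_red {L₁ L₂ : List (I × Bool)} (h : FreeGroup.Red L₁ L₂) : mw L₁ = mw L₂ := by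
  induction h with
  | refl => rfl
  | tail _ hstep ih => rw [ih, mw_step hstep]

lemma mw_reduce (L : List (I × Bool)) : mw (FreeGroup.reduce L) = mw L :=
  (mw_red FreeGroup.reduce.red).symm

lemma magnus_mul (a b : FreeGroup I) :
    magnus (a * b) = conv (magnus a) (magnus b) := by
  rw [magnus_eq_mw, magnus_eq_mw, magnus_eq_mw]
  have : a * b = FreeGroup.mk (a.toWord ++ b.toWord) := by
    rw [← FreeGroup.mul_mk, FreeGroup.mk_toWord, FreeGroup.mk_toWord]
  rw [this, FreeGroup.toWord_mk, mw_reduce, mw_append]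

lemma magnus_one : magnus (1 : FreeGroup I) = oneSeries := by
  rw [magnus_eq_mw, FreeGroup.toWord_one, mw_nil]

lemma magnus_of (i : I) : magnus (FreeGroup.of i) = genSeries i := by
  rw [magnus_eq_mw, FreeGroup.toWord_of]
  show conv (letterSeries (i, true)) oneSeries = _
  rw [conv_one_right]; rfl

lemma magnus_of_inv (i : I) : magnus (FreeGroup.of i)⁻¹ = invGenSeries i := by
  have h : (FreeGroup.of i)⁻¹ = FreeGroup.mk [(i, false)] := by
    rw [show FreeGroup.of i = FreeGroup.mk [(i, true)] from rfl, FreeGroup.inv_mk]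
    rfl
  rw [magnus_eq_mw, h, FreeGroup.toWord_mk, FreeGroup.reduce_singleton]
  show conv (letterSeries (i, false)) oneSeries = _
  rw [conv_one_right]; rfl

/-! ### Reduced words and the run word -/

/-- A word is reduced if no two adjacent letters cancel. -/
def Reduced (L : List (I × Bool)) : Prop :=
  List.Chain' (fun p q => p.1 = q.1 → p.2 = q.2) L

lemma reduce_reduced (L : List (I × Bool)) : Reduced (FreeGroup.reduce L) := by
  induction L with
  | nil => exact List.isChain_nil
  | cons x L ih =>
    show Reduced (FreeGroup.reduce (x :: L))
    rw [show FreeGroup.reduce (x :: L) =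
        List.casesOn (FreeGroup.reduce L) [x] (fun hd2 tl2 =>
          if x.1 = hd2.1 ∧ x.2 = !hd2.2 then tl2 else x :: hd2 :: tl2) from rfl]
    cases hL : FreeGroup.reduce L with
    | nil => exact List.isChain_singleton x
    | cons y t =>
      rw [hL] at ih
      by_cases hc : x.1 = y.1 ∧ x.2 = !y.2
      · simpa [hc, Reduced, List.Chain'] using ih.tail
      · simp only [hc, if_false]
        refine List.IsChain.cons_cons ?_ ih
        intro h1
        by_contra h2
        exact hc ⟨h1, by revert h2; cases x.2 <;> cases y.2 <;> simp⟩

lemma toWord_reduced (a : FreeGroup I) : Reduced (FreeGroup.toWord a) := by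
  rw [← FreeGroup.reduce_toWord]; exact reduce_reduced _

/-- Collapse adjacent equal letters. -/
def rwd : List I → List I
  | [] => []
  | [i] => [i]
  | i :: j :: t => if i = j then rwd (j :: t) else i :: rwd (j :: t)

/-- The run word of a word: one letter for each maximal run. -/
def rw (L : List (I × Bool)) : List I := rwd (L.map Prod.fst)

lemma rwd_head : ∀ (t : List I) (i : I), (rwd (i :: t)).head? = some i := by
  intro t
  induction t with
  | nil => intro i; rfl
  | cons j t ih =>
    intro i
    show (if i = j then rwd (j :: t) else i :: rwd (j :: t)).head? = some i
    by_cases h : i = j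
    · subst h; simp [ih]
    · simp [h]

lemma rwd_chain' : ∀ l : List I, List.Chain' (· ≠ ·) (rwd l)
  | [] => List.isChain_nil
  | [i] => List.isChain_singleton i
  | i :: j :: t => by
    show List.Chain' (· ≠ ·) (if i = j then rwd (j :: t) else i :: rwd (j :: t))
    by_cases h : i = j
    · simpa [h] using rwd_chain' (j :: t)
    · simp only [h, if_false]
      rw [List.Chain', List.isChain_cons]
      refine ⟨?_, rwd_chain' (j :: t)⟩
      intro y hy
      rw [rwd_head t j] at hy
      simp at hy
      subst hy
      exact h

lemma rw_chain' (L : List (I × Bool)) : List.Chain' (· ≠ ·) (rw L) := rwd_chain' _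

lemma rw_head (p : I × Bool) (L : List (I × Bool)) : (rw (p :: L)).head? = some p.1 :=
  rwd_head _ _

/-! ### Support of the Magnus expansion -/

/-- Words producible as concatenations of powers of letters of `L`, in order. -/
inductive Prodc : List (I × Bool) → List I → Prop
  | nil : Prodc [] []
  | cons (p : I × Bool) {L : List (I × Bool)} {w : List I} (m : ℕ) :
      Prodc L w → Prodc (p :: L) (List.replicate m p.1 ++ w)

lemma letterSeries_support {p : I × Bool} {u : List I} (h : letterSeries p u ≠ 0) :
    u = List.replicate u.length p.1 := by
  rcases p with ⟨i, b⟩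
  show u = List.replicate u.length i
  cases b with
  | false =>
    have hls : letterSeries (i, false) = invGenSeries i := by simp [letterSeries]
    rw [hls] at h
    by_contra hne
    exact h (by simp [invGenSeries, hne])
  | true =>
    have hls : letterSeries (i, true) = genSeries i := by simp [letterSeries]
    rw [hls] at h
    rcases u with _ | ⟨a, u⟩
    · simp
    · have h2 : a :: u = [i] := by
        by_contra h2
        exact h (by simp [genSeries, h2])
      rw [h2]
      rfl

lemma mw_support : ∀ (L : List (I × Bool)) (w : List I), mw L w ≠ 0 → Prodc L w := by
  intro L
  induction L with
  | nil =>
    intro w h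
    cases w with
    | nil => exact Prodc.nil
    | cons a w => exact absurd rfl h
  | cons p L ih =>
    intro w h
    rw [mw_cons] at h
    unfold conv at h
    obtain ⟨k, _, hk⟩ := Finset.exists_ne_zero_of_sum_ne_zero h
    have h1 : letterSeries p (w.take k) ≠ 0 := fun hz => hk (by rw [hz, zero_mul])
    have h2 : mw L (w.drop k) ≠ 0 := fun hz => hk (by rw [hz, mul_zero])
    have h3 := letterSeries_support h1
    have h4 := ih _ h2
    have h5 := Prodc.cons p (w.take k).length h4
    rw [← h3, List.take_append_drop] at h5
    exact h5

lemma prodc_sublist {L : List (I × Bool)} {w : List I} (h : Prodc L w)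
    (hc : List.Chain' (· ≠ ·) w) : w <+ L.map Prod.fst := by
  induction h with
  | nil => exact List.Sublist.refl _
  | @cons p L w m _ ih =>
    match m with
    | 0 =>
      simpa using (ih hc).cons p.1
    | 1 =>
      rw [List.replicate_one] at hc ⊢
      rw [List.singleton_append] at hc ⊢
      exact (ih hc.tail).cons₂ p.1
    | (m + 2) =>
      exfalso
      rw [List.replicate_succ, List.replicate_succ, List.cons_append, List.cons_append,
        List.Chain', List.isChain_cons_cons] at hc
      exact hc.1 rfl

lemma sublist_rwd : ∀ (l w : List I), w <+ l → List.Chain' (· ≠ ·) w → w <+ rwd l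
  | [], w, hs, _ => by simpa [rwd] using hs
  | [i], w, hs, _ => by simpa [rwd] using hs
  | i :: j :: t, w, hs, hc => by
    show w <+ (if i = j then rwd (j :: t) else i :: rwd (j :: t))
    by_cases h : i = j
    · subst h
      simp only [if_pos rfl]
      rcases List.sublist_cons_iff.1 hs with h1 | ⟨r, rfl, hr⟩
      · exact sublist_rwd _ _ h1 hc
      · -- w = i :: r, r <+ i :: t
        rcases List.sublist_cons_iff.1 hr with h2 | ⟨r', rfl, hr'⟩
        · exact sublist_rwd _ _ ((h2.cons₂ i) : i :: r <+ i :: t) hc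
        · rw [List.Chain', List.isChain_cons_cons] at hc
          exact absurd rfl hc.1
    · simp only [h, if_false]
      rcases List.sublist_cons_iff.1 hs with h1 | ⟨r, rfl, hr⟩
      · exact (sublist_rwd _ _ h1 hc).cons i
      · rw [List.Chain', List.isChain_cons] at hc
        exact (sublist_rwd _ _ hr hc.2).cons₂ i

lemma rwd_length_le : ∀ l : List I, (rwd l).length ≤ l.length
  | [] => le_refl _
  | [i] => le_refl _
  | i :: j :: t => by
    show (if i = j then rwd (j :: t) else i :: rwd (j :: t)).length ≤ _
    by_cases h : i = j
    · simp only [if_pos h]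
      exact le_trans (rwd_length_le (j :: t)) (by simp)
    · simp only [if_neg h, List.length_cons]
      exact Nat.succ_le_succ (rwd_length_le (j :: t))

/-- Vanishing lemma: the coefficient at `i :: rw L` vanishes when `i` is not the
first run letter of `L`. -/
lemma mw_vanish (L : List (I × Bool)) (i : I) (h : (rw L).head? ≠ some i) :
    mw L (i :: rw L) = 0 := by
  by_contra h0
  have hP := mw_support L _ h0
  have hch : List.Chain' (· ≠ ·) (i :: rw L) := by
    rw [List.Chain', List.isChain_cons]
    refine ⟨?_, rw_chain' L⟩
    intro y hy
    intro hiy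
    exact h (by rw [hy, hiy])
  have hs := prodc_sublist hP hch
  have hs2 := sublist_rwd (L.map Prod.fst) _ hs hch
  have h2 : (i :: rw L).length ≤ (rw L).length := hs2.length_le
  rw [List.length_cons] at h2
  omega

/-! ### The key positivity lemma -/

/-- The sign `±1` attached to a boolean. -/
def eps (b : Bool) : ℤ := if b then 1 else -1

lemma eps_mul_self (b : Bool) : eps b * eps b = 1 := by cases b <;> simp [eps]

lemma eps_ne_zero (b : Bool) : eps b ≠ 0 := by cases b <;> simp [eps]

/-- The sign of the leading coefficient: product of the sign of one letter per run. -/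
def sgn : List (I × Bool) → ℤ
  | [] => 1
  | p :: L =>
    match L with
    | [] => eps p.2
    | q :: L' => if p.1 = q.1 then sgn (q :: L') else eps p.2 * sgn (q :: L')

lemma letterSeries_single (p : I × Bool) : letterSeries p [p.1] = eps p.2 := by
  rcases p with ⟨i, b⟩
  cases b <;> simp [letterSeries, genSeries, invGenSeries, eps]

/-- Evaluation of a convolution with a letter series at a word with no two
adjacent equal letters. -/
lemma conv_letter_eval (p : I × Bool) (g : List I → ℤ) (w : List I)
    (hw : List.Chain' (· ≠ ·) w) :
    conv (letterSeries p) g w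
      = g w + (if w.head? = some p.1 then eps p.2 * g w.tail else 0) := by
  cases w with
  | nil => simp [conv_nil, letterSeries_nil]
  | cons a v =>
    rw [conv_cons, letterSeries_nil, one_mul]
    congr 1
    by_cases h : a = p.1
    · subst h
      simp only [List.head?_cons, if_pos rfl, List.tail_cons]
      rcases p with ⟨i, b⟩
      simp only at *
      cases b with
      | true =>
        have h1 : (fun u => letterSeries ((i:I), true) (i :: u)) = (oneSeries : List I → ℤ) := by
          funext u
          cases u <;> simp [letterSeries, genSeries, oneSeries]
        rw [h1, conv_one_left]
        simp [eps]
      | false =>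
        have h1 : (fun u => letterSeries ((i:I), false) (i :: u)) =
            fun u => -(invGenSeries i u) := by
          funext u
          exact invGenSeries_cons_self i u
        rw [h1, conv_neg_left]
        have h2 : conv (invGenSeries i) g v = g v := by
          cases v with
          | nil => simp [conv_nil, invGenSeries]
          | cons c t =>
            rw [List.Chain', List.isChain_cons_cons] at hw
            rw [conv_cons]
            rw [show invGenSeries i [] = 1 by simp [invGenSeries], one_mul]
            have h3 : (fun u => invGenSeries i (c :: u)) = fun _ => (0:ℤ) := by
              funext u
              exact invGenSeries_cons_ne i c (Ne.symm hw.1) u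
            rw [h3, conv_zero_left, add_zero]
        rw [h2]
        simp [eps]
    · have hne : (a :: v).head? ≠ some p.1 := by simp [h]
      rw [if_neg hne]
      have h1 : (fun u => letterSeries p (a :: u)) = fun _ => (0:ℤ) := by
        funext u
        by_contra hne
        have : letterSeries p (a :: u) ≠ 0 := by
          intro hz; exact hne (by rw [hz])
        have := letterSeries_support this
        rw [List.length_cons, List.replicate_succ] at this
        exact h (by injection this)
      rw [h1, conv_zero_left]

/-- The central positivity lemma, proved by induction along the reduced word. -/
lemma key : ∀ (L : List (I × Bool)) (p : I × Bool), Reduced (p :: L) →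
    0 < sgn (p :: L) * mw (p :: L) (rw (p :: L)) ∧
    0 < eps p.2 * sgn (p :: L) * mw (p :: L) ((rw (p :: L)).drop 1) := by
  intro L
  induction L with
  | nil =>
    intro p _
    have h1 : rw [p] = [p.1] := rfl
    have h2 : mw [p] = letterSeries p := by
      rw [mw_cons, mw_nil, conv_one_right]
    constructor
    · rw [h1, h2, letterSeries_single]
      show 0 < sgn [p] * eps p.2
      show 0 < eps p.2 * eps p.2
      rw [eps_mul_self]; norm_num
    · rw [h1, h2]
      show 0 < eps p.2 * eps p.2 * letterSeries p []
      rw [eps_mul_self, letterSeries_nil]; norm_num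
  | cons q L' ih =>
    intro p hred
    have hred' : Reduced (q :: L') := hred.tail
    obtain ⟨IH1, IH2⟩ := ih q hred'
    have hhead : (rw (q :: L')).head? = some q.1 := rw_head q (q :: L')|>.symm ▸ rw_head q L'
    by_cases hpq : p.1 = q.1
    · -- same run
      have hb : p.2 = q.2 := by
        rw [Reduced, List.Chain', List.isChain_cons_cons] at hred
        exact hred.1 hpq
      have hrw : rw (p :: q :: L') = rw (q :: L') := by
        show rwd (p.1 :: q.1 :: L'.map Prod.fst) = rwd (q.1 :: L'.map Prod.fst)
        rw [rwd]
        simp [hpq]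
      have hsgn : sgn (p :: q :: L') = sgn (q :: L') := by
        show (if p.1 = q.1 then sgn (q :: L') else _) = _
        simp [hpq]
      set w := rw (q :: L') with hw
      have hwch : List.Chain' (· ≠ ·) w := rw_chain' _
      have heval : mw (p :: q :: L') w
          = mw (q :: L') w + eps p.2 * mw (q :: L') (w.drop 1) := by
        rw [mw_cons, conv_letter_eval p _ w hwch]
        rw [if_pos (by rw [hhead, hpq]), List.drop_one]
      constructor
      · rw [hrw, hsgn, heval, mul_add]
        have t1 : 0 < sgn (q :: L') * mw (q :: L') w := IH1
        have t2 : 0 < sgn (q :: L') * (eps p.2 * mw (q :: L') (w.drop 1)) := by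
          have := IH2
          rw [hb]
          calc 0 < eps q.2 * sgn (q :: L') * mw (q :: L') (w.drop 1) := IH2
          _ = sgn (q :: L') * (eps q.2 * mw (q :: L') (w.drop 1)) := by ring
        linarith
      · -- second component at (rw).drop 1
        rw [hrw, hsgn]
        set v := w.drop 1 with hv
        have hvch : List.Chain' (· ≠ ·) v := by
          rcases hwl : w with _ | ⟨a, t⟩
          · simp [hv, hwl, List.Chain']
          · rw [hwl] at hwch
            simpa [hv, hwl, List.Chain'] using hwch.tail
        have heval2 : mw (p :: q :: L') v = mw (q :: L') v := by
          rw [mw_cons, conv_letter_eval p _ v hvch]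
          have : v.head? ≠ some p.1 := by
            rcases hwl : w with _ | ⟨a, t⟩
            · simp [hv, hwl]
            · have ha : a = q.1 := by
                have := hhead; rw [hwl] at this; injection this
              rw [hwl] at hwch
              rw [List.Chain', List.isChain_cons] at hwch
              simp only [hv, hwl, List.drop_succ_cons, List.drop_zero]
              intro hth
              exact hwch.1 _ hth (by rw [ha, hpq])
          rw [if_neg this, add_zero]
        rw [heval2, hb]
        exact IH2
    · -- new run
      have hrw : rw (p :: q :: L') = p.1 :: rw (q :: L') := by
        show rwd (p.1 :: q.1 :: L'.map Prod.fst) = p.1 :: rwd (q.1 :: L'.map Prod.fst)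
        rw [rwd]
        simp [hpq]
      have hsgn : sgn (p :: q :: L') = eps p.2 * sgn (q :: L') := by
        show (if p.1 = q.1 then _ else eps p.2 * sgn (q :: L')) = _
        simp [hpq]
      set w := rw (q :: L') with hw
      have hwch : List.Chain' (· ≠ ·) w := rw_chain' _
      have hich : List.Chain' (· ≠ ·) (p.1 :: w) := by
        rw [List.Chain', List.isChain_cons]
        refine ⟨?_, hwch⟩
        intro y hy
        rw [hhead] at hy
        intro he
        exact hpq (by rw [he]; injection hy with hh; rw [hh])
      constructor
      · rw [hrw, hsgn]
        have heval : mw (p :: q :: L') (p.1 :: w)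
            = mw (q :: L') (p.1 :: w) + eps p.2 * mw (q :: L') w := by
          rw [mw_cons, conv_letter_eval p _ _ hich]
          simp
        have hz : mw (q :: L') (p.1 :: w) = 0 := by
          apply mw_vanish
          rw [hhead]
          intro hcon
          exact hpq (by injection hcon with hh; rw [hh])
        rw [heval, hz, zero_add]
        calc 0 < sgn (q :: L') * mw (q :: L') w := IH1
        _ = eps p.2 * sgn (q :: L') * (eps p.2 * mw (q :: L') w) := by
            have := eps_mul_self p.2; nlinarith [eps_mul_self p.2]
      · rw [hrw, hsgn, List.drop_one, List.tail_cons]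
        have heval : mw (p :: q :: L') w = mw (q :: L') w := by
          rw [mw_cons, conv_letter_eval p _ _ hwch]
          rw [if_neg, add_zero]
          rw [hhead]
          intro hcon
          exact hpq (by injection hcon with hh; rw [hh])
        rw [heval]
        calc 0 < sgn (q :: L') * mw (q :: L') w := IH1
        _ = eps p.2 * (eps p.2 * sgn (q :: L')) * mw (q :: L') w := by
            nlinarith [eps_mul_self p.2]

/-! ### Injectivity -/

lemma magnus_ne_one {c : FreeGroup I} (hc : c ≠ 1) : magnus c ≠ oneSeries := by
  intro h
  rcases hL : FreeGroup.toWord c with _ | ⟨p, L⟩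
  · exact hc (FreeGroup.toWord_eq_nil_iff.1 hL)
  · have hred : Reduced (p :: L) := hL ▸ toWord_reduced c
    obtain ⟨h1, _⟩ := key L p hred
    have hm : mw (p :: L) = oneSeries := by
      rw [← hL, ← magnus_eq_mw, h]
    rw [hm] at h1
    have hhd : (rw (p :: L)).head? = some p.1 := rw_head p L
    rcases hrwl : rw (p :: L) with _ | ⟨a, t⟩
    · rw [hrwl] at hhd; simp at hhd
    · rw [hrwl] at h1
      simp [oneSeries] at h1

lemma magnus_injective : Function.Injective (magnus (I := I)) := by
  intro a b hab
  by_contra hne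
  have h1 : a⁻¹ * b ≠ 1 := by
    intro h
    rw [inv_mul_eq_one] at h
    exact hne h
  apply magnus_ne_one h1
  rw [magnus_mul, ← hab, ← magnus_mul, inv_mul_cancel, magnus_one]

end Magnus

theorem magnus_expansion_injective_hom {I : Type*} [DecidableEq I] :
    Function.Injective (magnus (I := I)) ∧
    magnus (1 : FreeGroup I) = oneSeries ∧
    (∀ a b : FreeGroup I, magnus (a * b) = conv (magnus a) (magnus b)) ∧
    (∀ i : I, magnus (FreeGroup.of i) = genSeries i) ∧
    (∀ i : I, magnus (FreeGroup.of i)⁻¹ = invGenSeries i) ∧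
    (∀ a : FreeGroup I, magnus a [] = 1) := by
  exact ⟨magnus_injective, magnus_one, magnus_mul, magnus_of, magnus_of_inv,
    fun a => mw_coeff_nil _⟩
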